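/- Let P and Q be discrete distributions with likelihood-ratio CDFs F(t) = Pr_{y~P}[P(y)/Q(y) ≤ t] and G(t) = Pr_{y~Q}[P(y)/Q(y) ≤ t], supported on finitely many ratio values t₁ < t₂ < … < t_k (all with Q-mass positive), and let f(∞) = ∑_{y : Q(y)=0} P(y). Then the Bayes-optimal success probability satisfies β_n(P,Q) = f(∞) + (1/n) ∑_{j=1}^{k} t_j · (G(t_j)^n − G(t_j⁻)^n), where G(t⁻) = Pr_{y~Q}[P(y)/Q(y) < t]. -/

import Mathlib

open scoped Classical BigOperators

/-- Success probability of adversary `A` in the shuffle re-identification game: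
each user `i` samples `y i` from distribution `Pvec i`, a uniformly random
permutation `σ` is applied, the adversary sees the shuffled vector and wins if
it outputs `σ⁻¹ 0` (the shuffled position of user 0, the target). -/
noncomputable def shuffleSuccess {Y : Type*} [Fintype Y] (n : ℕ) [NeZero n]
    (Pvec : Fin n → Y → ℝ) (A : (Fin n → Y) → Fin n) : ℝ :=
  (Nat.factorial n : ℝ)⁻¹ *
    ∑ σ : Equiv.Perm (Fin n), ∑ y : Fin n → Y,
      (∏ i, Pvec i (y i)) * (if A (fun i => y (σ i)) = σ.symm 0 then 1 else 0)

/-- Bayes-optimal success probability `β_n(P,Q)`: user 0 samples from `P`,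
the other `n - 1` users sample i.i.d. from `Q`, and we take the supremum over
all adversaries. -/
noncomputable def betaN {Y : Type*} [Fintype Y] (P Q : Y → ℝ) (n : ℕ) [NeZero n] : ℝ :=
  ⨆ A : (Fin n → Y) → Fin n,
    shuffleSuccess n (fun i => if i = 0 then P else Q) A

noncomputable def gfun {Y : Type*} [Fintype Y] {n : ℕ} (P Q : Y → ℝ) (z : Fin n → Y) (k : Fin n) : ℝ :=
  P (z k) * ∏ j ∈ Finset.univ.erase k, Q (z j)

lemma gfun_eq_prod {Y : Type*} [Fintype Y] {n : ℕ} (P Q : Y → ℝ) (z : Fin n → Y) (k : Fin n) :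
    gfun P Q z k = ∏ i, (if i = k then P else Q) (z i) := by
  rw [gfun, ← Finset.mul_prod_erase Finset.univ _ (Finset.mem_univ k)]
  simp only [if_pos rfl]
  congr 1
  refine Finset.prod_congr rfl fun j hj => ?_
  rw [if_neg (Finset.ne_of_mem_erase hj)]

lemma sum_perm {m : ℕ} (F : Fin (m+1) → ℝ) :
    ∑ σ : Equiv.Perm (Fin (m+1)), F (σ 0) = (Nat.factorial m : ℝ) * ∑ k, F k := by
  rw [← Equiv.sum_comp Equiv.Perm.decomposeFin.symm (fun σ => F (σ 0))]
  rw [Fintype.sum_prod_type]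
  simp only [Equiv.Perm.decomposeFin_symm_apply_zero, Finset.sum_const, Finset.card_univ,
    Fintype.card_perm, Fintype.card_fin, nsmul_eq_mul, Finset.mul_sum]

lemma shuffle_eq {Y : Type*} [Fintype Y] (P Q : Y → ℝ) (n : ℕ) [NeZero n]
    (A : (Fin n → Y) → Fin n) :
    shuffleSuccess n (fun i => if i = 0 then P else Q) A
      = (n : ℝ)⁻¹ * ∑ z : Fin n → Y, gfun P Q z (A z) := by
  obtain ⟨m, rfl⟩ : ∃ m, n = m + 1 := ⟨n - 1, (Nat.succ_pred_eq_of_pos (NeZero.pos n)).symm⟩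
  rw [shuffleSuccess]
  have step1 : ∀ σ : Equiv.Perm (Fin (m+1)),
      (∑ y : Fin (m+1) → Y, (∏ i, (if i = 0 then P else Q) (y i)) *
        (if A (fun i => y (σ i)) = σ.symm 0 then 1 else 0))
      = ∑ z : Fin (m+1) → Y, gfun P Q z (σ.symm 0) *
          (if A z = σ.symm 0 then 1 else 0) := by
    intro σ
    refine Fintype.sum_equiv (Equiv.arrowCongr σ.symm (Equiv.refl Y)) _ _ fun y => ?_
    have he : (Equiv.arrowCongr σ.symm (Equiv.refl Y)) y = fun i => y (σ i) := rfl
    rw [he]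
    congr 1
    rw [gfun_eq_prod, ← Equiv.prod_comp σ.symm
      (fun j => (if j = σ.symm 0 then P else Q) (y (σ j)))]
    refine Fintype.prod_congr _ _ fun i => ?_
    simp [EmbeddingLike.apply_eq_iff_eq]
  rw [Fintype.sum_congr _ _ step1, Finset.sum_comm]
  have step2 : ∀ z : Fin (m+1) → Y,
      (∑ σ : Equiv.Perm (Fin (m+1)), gfun P Q z (σ.symm 0) *
        (if A z = σ.symm 0 then 1 else 0))
      = (Nat.factorial m : ℝ) * gfun P Q z (A z) := by
    intro z
    have h1 : (∑ σ : Equiv.Perm (Fin (m+1)), gfun P Q z (σ.symm 0) *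
        (if A z = σ.symm 0 then 1 else 0))
        = ∑ σ : Equiv.Perm (Fin (m+1)),
            gfun P Q z (σ 0) * (if A z = σ 0 then 1 else 0) := by
      rw [← Equiv.sum_comp (Equiv.inv (Equiv.Perm (Fin (m+1))))
        (fun σ => gfun P Q z (σ 0) * (if A z = σ 0 then 1 else 0))]
      simp [Equiv.Perm.inv_def]
    rw [h1, sum_perm (fun k => gfun P Q z k * (if A z = k then 1 else 0))]
    congr 1
    simp only [mul_ite, mul_one, mul_zero]
    rw [Finset.sum_ite_eq]
    simp
  rw [Fintype.sum_congr _ _ step2, ← Finset.mul_sum, ← mul_assoc]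
  congr 1
  rw [Nat.factorial_succ]
  have h : (Nat.factorial m : ℝ) ≠ 0 := by positivity
  push_cast
  field_simp

open Finset

lemma betaN_eq {Y : Type*} [Fintype Y] (P Q : Y → ℝ) (n : ℕ) [NeZero n] :
    betaN P Q n = (n : ℝ)⁻¹ * ∑ z : Fin n → Y,
      Finset.univ.sup' ⟨0, Finset.mem_univ 0⟩ (gfun P Q z) := by
  have hne : (Finset.univ : Finset (Fin n)).Nonempty := ⟨0, Finset.mem_univ 0⟩
  have h := fun z : Fin n → Y => Finset.exists_mem_eq_sup' hne (gfun P Q z)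
  choose Aopt hmem hval using h
  apply le_antisymm
  · apply ciSup_le
    intro A
    rw [shuffle_eq]
    apply mul_le_mul_of_nonneg_left _ (by positivity)
    refine Finset.sum_le_sum fun z _ => ?_
    exact Finset.le_sup' (gfun P Q z) (Finset.mem_univ (A z))
  · have : (n : ℝ)⁻¹ * (∑ z : Fin n → Y,
        Finset.univ.sup' ⟨0, Finset.mem_univ 0⟩ (gfun P Q z))
        = shuffleSuccess n (fun i => if i = 0 then P else Q) Aopt := by
      rw [shuffle_eq]
      congr 1
      exact Finset.sum_congr rfl fun z _ => hval z
    rw [this]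
    exact le_ciSup (Set.Finite.bddAbove (Set.finite_range _)) Aopt

lemma sum_pi_gfun {Y : Type*} [Fintype Y] (P Q : Y → ℝ) {n : ℕ} [NeZero n]
    (s : Finset Y) (k : Fin n) :
    ∑ z ∈ Fintype.piFinset (fun _ : Fin n => s), gfun P Q z k
      = (∑ y ∈ s, P y) * (∑ y ∈ s, Q y) ^ (n - 1) := by
  have : ∀ z : Fin n → Y, gfun P Q z k = ∏ i, (if i = k then P else Q) (z i) :=
    fun z => gfun_eq_prod P Q z k
  simp only [this]
  rw [← Finset.prod_univ_sum]
  rw [← Finset.mul_prod_erase Finset.univ _ (Finset.mem_univ k)]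
  simp only [if_pos rfl]
  congr 1
  rw [Finset.prod_congr rfl (fun j hj => by rw [if_neg (Finset.ne_of_mem_erase hj)]),
    Finset.prod_const, Finset.card_erase_of_mem (Finset.mem_univ k), Finset.card_univ,
    Fintype.card_fin]

lemma sup_eq_sum_of_zero {Y : Type*} [Fintype Y] (P Q : Y → ℝ) (hP0 : ∀ y, 0 ≤ P y)
    (hQ0 : ∀ y, 0 ≤ Q y) {n : ℕ} [NeZero n] (z : Fin n → Y) (j₀ : Fin n)
    (hj : Q (z j₀) = 0) :
    Finset.univ.sup' ⟨0, Finset.mem_univ 0⟩ (gfun P Q z) = ∑ k, gfun P Q z k := by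
  have hzero : ∀ k, k ≠ j₀ → gfun P Q z k = 0 := by
    intro k hk
    rw [gfun, Finset.prod_eq_zero (Finset.mem_erase.2 ⟨fun h => hk h.symm, Finset.mem_univ j₀⟩) hj, mul_zero]
  have hnn : 0 ≤ gfun P Q z j₀ :=
    mul_nonneg (hP0 _) (Finset.prod_nonneg fun j _ => hQ0 _)
  rw [Finset.sum_eq_single_of_mem j₀ (Finset.mem_univ j₀) fun b _ hb => hzero b hb]
  apply le_antisymm
  · apply Finset.sup'_le
    intro k _
    by_cases hk : k = j₀
    · rw [hk]
    · rw [hzero k hk]; exact hnn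
  · exact Finset.le_sup' (gfun P Q z) (Finset.mem_univ j₀)

lemma mul_sup' {ι : Type*} (s : Finset ι) (H : s.Nonempty) (c : ℝ) (hc : 0 ≤ c)
    (f : ι → ℝ) : c * s.sup' H f = s.sup' H (fun i => c * f i) :=
  Finset.comp_sup'_eq_sup'_comp H (fun x => c * x) (fun x y => mul_max_of_nonneg x y hc)

/-- Discrete closed form: `β_n(P,Q) = f(∞) + (1/n) ∑_t t·(G(t)^n − G(t⁻)^n)`,
where the sum runs over the finitely many likelihood-ratio values attained on
`{y | Q y ≠ 0}`, `G t = Pr_{y~Q}[P y / Q y ≤ t]`, and `G(t⁻)` the strict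
version. -/
theorem stmt6 {Y : Type*} [Fintype Y] (P Q : Y → ℝ)
    (hP0 : ∀ y, 0 ≤ P y) (hQ0 : ∀ y, 0 ≤ Q y)
    (hP1 : ∑ y, P y = 1) (hQ1 : ∑ y, Q y = 1)
    (n : ℕ) [NeZero n] :
    betaN P Q n =
      (∑ y ∈ Finset.univ.filter (fun y => Q y = 0), P y) +
      (n : ℝ)⁻¹ *
        ∑ t ∈ (Finset.univ.filter (fun y => Q y ≠ 0)).image (fun y => P y / Q y),
          t * ((∑ y ∈ Finset.univ.filter (fun y => Q y ≠ 0 ∧ P y / Q y ≤ t), Q y) ^ n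
             - (∑ y ∈ Finset.univ.filter (fun y => Q y ≠ 0 ∧ P y / Q y < t), Q y) ^ n) := by
  classical
  have hne : (Finset.univ : Finset (Fin n)).Nonempty := ⟨0, Finset.mem_univ 0⟩
  set c0 : ℝ := ∑ y ∈ Finset.univ.filter (fun y => Q y = 0), P y with hc0
  set S : Finset Y := Finset.univ.filter (fun y => Q y ≠ 0) with hS
  set r : Y → ℝ := fun y => P y / Q y with hr
  set good : Finset (Fin n → Y) := Fintype.piFinset (fun _ : Fin n => S) with hgood
  set M : (Fin n → Y) → ℝ := fun z => Finset.univ.sup' hne (fun k => r (z k)) with hM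
  have hSQ : ∑ y ∈ S, Q y = 1 := by rw [hS]; rw [Finset.sum_filter_ne_zero, hQ1]
  have hSP : ∑ y ∈ S, P y = 1 - c0 := by
    have h := Finset.sum_filter_add_sum_filter_not Finset.univ (fun y => Q y = 0) P
    rw [hP1] at h
    have h2 : Finset.univ.filter (fun y => ¬ Q y = 0) = S := by rw [hS]
    rw [h2] at h
    linarith [h]
  rw [betaN_eq]
  have hngoal : ∑ z : Fin n → Y, Finset.univ.sup' ⟨0, Finset.mem_univ 0⟩ (gfun P Q z)
      = n * c0 + ∑ t ∈ S.image r,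
          t * ((∑ y ∈ S.filter (fun y => r y ≤ t), Q y) ^ n
             - (∑ y ∈ S.filter (fun y => r y < t), Q y) ^ n) := by
    rw [← Finset.sum_sdiff (Finset.subset_univ good)]
    have hbad : ∑ z ∈ Finset.univ \ good,
        Finset.univ.sup' ⟨0, Finset.mem_univ 0⟩ (gfun P Q z) = n * c0 := by
      have h1 : ∀ z ∈ Finset.univ \ good,
          Finset.univ.sup' ⟨0, Finset.mem_univ 0⟩ (gfun P Q z) = ∑ k, gfun P Q z k := by
        intro z hz
        rw [Finset.mem_sdiff] at hz
        have : ∃ j, Q (z j) = 0 := by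
          by_contra hcon
          push_neg at hcon
          exact hz.2 (Fintype.mem_piFinset.2 fun j => by
            rw [hS]; exact Finset.mem_filter.2 ⟨Finset.mem_univ _, hcon j⟩)
        obtain ⟨j₀, hj₀⟩ := this
        exact sup_eq_sum_of_zero P Q hP0 hQ0 z j₀ hj₀
      rw [Finset.sum_congr rfl h1, Finset.sum_sdiff_eq_sub (Finset.subset_univ good)]
      have hA : ∑ z : Fin n → Y, ∑ k, gfun P Q z k = n := by
        rw [Finset.sum_comm]
        have h3 : ∀ k : Fin n, ∑ z : Fin n → Y, gfun P Q z k = 1 := by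
          intro k
          rw [← Fintype.piFinset_univ, sum_pi_gfun P Q Finset.univ k, hP1, hQ1, one_pow, mul_one]
        rw [Finset.sum_congr rfl fun k _ => h3 k]
        simp
      have hB : ∑ z ∈ good, ∑ k, gfun P Q z k = n * (1 - c0) := by
        rw [Finset.sum_comm]
        have h3 : ∀ k : Fin n, ∑ z ∈ good, gfun P Q z k = 1 - c0 := by
          intro k
          rw [hgood, sum_pi_gfun P Q S k, hSP, hSQ, one_pow, mul_one]
        rw [Finset.sum_congr rfl fun k _ => h3 k]
        simp [mul_comm]
        ring
      rw [hA, hB]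
      ring
    have hzk : ∀ z ∈ good, ∀ k, Q (z k) ≠ 0 := by
      intro z hz k
      have := Fintype.mem_piFinset.1 hz k
      rw [hS, Finset.mem_filter] at this
      exact this.2
    have hgoodpart : ∑ z ∈ good,
        Finset.univ.sup' ⟨0, Finset.mem_univ 0⟩ (gfun P Q z)
        = ∑ t ∈ S.image r,
            t * ((∑ y ∈ S.filter (fun y => r y ≤ t), Q y) ^ n
               - (∑ y ∈ S.filter (fun y => r y < t), Q y) ^ n) := by
      have h2 : ∀ z ∈ good, Finset.univ.sup' ⟨0, Finset.mem_univ 0⟩ (gfun P Q z)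
          = (∏ j, Q (z j)) * M z := by
        intro z hz
        rw [hM, mul_sup' _ hne _ (Finset.prod_nonneg fun j _ => hQ0 _)]
        refine Finset.sup'_congr _ rfl fun k _ => ?_
        rw [gfun]
        have hP : P (z k) = r (z k) * Q (z k) := (div_mul_cancel₀ _ (hzk z hz k)).symm
        rw [hP, mul_assoc, Finset.mul_prod_erase Finset.univ (fun j => Q (z j)) (Finset.mem_univ k)]
        ring
      rw [Finset.sum_congr rfl h2]
      have hmaps : ∀ z ∈ good, M z ∈ S.image r := by
        intro z hz
        obtain ⟨k, -, hk⟩ := Finset.exists_mem_eq_sup' hne (fun k => r (z k))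
        simp only [hM]
        rw [hk]
        exact Finset.mem_image.2 ⟨z k, Fintype.mem_piFinset.1 hz k, rfl⟩
      rw [← Finset.sum_fiberwise_of_maps_to hmaps]
      refine Finset.sum_congr rfl fun t ht => ?_
      have h4 : ∀ z ∈ good.filter (fun z => M z = t),
          (∏ j, Q (z j)) * M z = t * ∏ j, Q (z j) := by
        intro z hz
        rw [(Finset.mem_filter.1 hz).2]; ring
      rw [Finset.sum_congr rfl h4, ← Finset.mul_sum]
      congr 1
      have hle : ∀ u : ℝ, good.filter (fun z => M z ≤ u)
          = Fintype.piFinset (fun _ : Fin n => S.filter (fun y => r y ≤ u)) := by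
        intro u
        ext z
        simp only [Finset.mem_filter, Fintype.mem_piFinset, hM, Finset.sup'_le_iff,
          Finset.mem_univ, forall_const, hgood]
        constructor
        · rintro ⟨h1, h2⟩ k; exact ⟨h1 k, h2 k⟩
        · intro h; exact ⟨fun k => (h k).1, fun k => (h k).2⟩
      have hlt : good.filter (fun z => M z < t)
          = Fintype.piFinset (fun _ : Fin n => S.filter (fun y => r y < t)) := by
        ext z
        simp only [Finset.mem_filter, Fintype.mem_piFinset, hM, Finset.sup'_lt_iff,
          Finset.mem_univ, forall_const, hgood]
        constructor
        · rintro ⟨h1, h2⟩ k; exact ⟨h1 k, h2 k⟩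
        · intro h; exact ⟨fun k => (h k).1, fun k => (h k).2⟩
      have hsum : ∀ s : Finset Y, ∑ z ∈ Fintype.piFinset (fun _ : Fin n => s),
          ∏ j, Q (z j) = (∑ y ∈ s, Q y) ^ n := by
        intro s
        rw [← Finset.prod_univ_sum (fun _ : Fin n => s) (fun _ y => Q y),
          Finset.prod_const, Finset.card_univ, Fintype.card_fin]
      have hfe : good.filter (fun z => M z = t)
          = good.filter (fun z => M z ≤ t) \ good.filter (fun z => M z < t) := by
        ext z
        simp only [Finset.mem_filter, Finset.mem_sdiff, not_and]
        constructor
        · rintro ⟨h1, h2⟩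
          exact ⟨⟨h1, h2.le⟩, fun _ hc => absurd h2 hc.ne⟩
        · rintro ⟨⟨h1, h2⟩, h3⟩
          exact ⟨h1, le_antisymm h2 (not_lt.1 (h3 h1))⟩
      rw [hfe, Finset.sum_sdiff_eq_sub
        (Finset.monotone_filter_right good fun z _ hz => le_of_lt hz),
        hle t, hlt, hsum, hsum]
    rw [hbad, hgoodpart]
  have hfilt1 : ∀ t : ℝ, S.filter (fun y => r y ≤ t)
      = Finset.univ.filter (fun y => Q y ≠ 0 ∧ P y / Q y ≤ t) := by
    intro t; simp only [hS, hr, Finset.filter_filter]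
  have hfilt2 : ∀ t : ℝ, S.filter (fun y => r y < t)
      = Finset.univ.filter (fun y => Q y ≠ 0 ∧ P y / Q y < t) := by
    intro t; simp only [hS, hr, Finset.filter_filter]
  rw [hngoal, mul_add, ← mul_assoc,
    inv_mul_cancel₀ (Nat.cast_ne_zero.2 (NeZero.ne n) : (n:ℝ) ≠ 0), one_mul]
  simp only [hfilt1, hfilt2]
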